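/- arXiv:1709.02803 — 7 statements merged into one kernel-verified Lean document; each statement's English description precedes it below -/
import Mathlib

section
/- Let U ⊆ ℝ³ be open, let d : ℝ³ → ℝ be C² on U with ‖∇d(q)‖ = 1 for all q ∈ U, and set ν = ∇d. Then for every vector field v : ℝ³ → ℝ³ differentiable on U and every p ∈ U, the surface curl of v equals minus the surface divergence of the rotated field ν × v: (curl v)(p)·ν(p) = −[ div(ν × v)(p) − ν(p)·( D(ν × v)(p) ν(p) ) ]. (This is the identity Rot_S v = −Div_S(ν × v) used in the paper to pass from the velocity v to the rotated unknown w = ν × v.) -/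
noncomputable section
open RealInnerProductSpace

abbrev E3 := EuclideanSpace ℝ (Fin 3)

/-- Build a vector in `ℝ³` from its three Cartesian components. -/
def vec3 (a b c : ℝ) : E3 := (WithLp.equiv 2 (Fin 3 → ℝ)).symm ![a, b, c]

/-- The `i`-th standard basis vector of `ℝ³`. -/
def e3 (i : Fin 3) : E3 := EuclideanSpace.single i 1

/-- Divergence of a vector field: the trace of its Jacobian. -/
def div3 (v : E3 → E3) (p : E3) : ℝ := LinearMap.trace ℝ E3 (fderiv ℝ v p : E3 →ₗ[ℝ] E3)

/-- Curl of a vector field on `ℝ³`. -/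
def curl3 (v : E3 → E3) (p : E3) : E3 :=
  vec3 (fderiv ℝ v p (e3 1) 2 - fderiv ℝ v p (e3 2) 1)
       (fderiv ℝ v p (e3 2) 0 - fderiv ℝ v p (e3 0) 2)
       (fderiv ℝ v p (e3 0) 1 - fderiv ℝ v p (e3 1) 0)

/-- Cross product on `ℝ³`. -/
def cross3 (a b : E3) : E3 :=
  vec3 (a 1 * b 2 - a 2 * b 1) (a 2 * b 0 - a 0 * b 2) (a 0 * b 1 - a 1 * b 0)

lemma E3ext {x y : E3} (h : ∀ i, x i = y i) : x = y := PiLp.ext h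

/-- The cross product, as a bilinear map. -/
def crossLin : E3 →ₗ[ℝ] E3 →ₗ[ℝ] E3 :=
  LinearMap.mk₂ ℝ cross3
    (fun a a' b => by apply E3ext; intro i; fin_cases i <;>
      simp [cross3, vec3, WithLp.equiv_symm_apply, PiLp.toLp_apply] <;> ring)
    (fun c a b => by apply E3ext; intro i; fin_cases i <;>
      simp [cross3, vec3, WithLp.equiv_symm_apply, PiLp.toLp_apply] <;> ring)
    (fun a b b' => by apply E3ext; intro i; fin_cases i <;>
      simp [cross3, vec3, WithLp.equiv_symm_apply, PiLp.toLp_apply] <;> ring)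
    (fun c a b => by apply E3ext; intro i; fin_cases i <;>
      simp [cross3, vec3, WithLp.equiv_symm_apply, PiLp.toLp_apply] <;> ring)

/-- The cross product, as a continuous bilinear map. -/
def crossCLM : E3 →L[ℝ] E3 →L[ℝ] E3 :=
  LinearMap.toContinuousLinearMap
    { toFun := fun a => LinearMap.toContinuousLinearMap (crossLin a)
      map_add' := fun a a' => by ext b; simp
      map_smul' := fun c a => by ext b; simp }

@[simp] lemma crossCLM_apply (a b : E3) : crossCLM a b = cross3 a b := rfl

lemma hasFDerivAt_cross {f g : E3 → E3} {f' g' : E3 →L[ℝ] E3} {p : E3}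
    (hf : HasFDerivAt f f' p) (hg : HasFDerivAt g g' p) :
    HasFDerivAt (fun q => cross3 (f q) (g q))
      (((crossCLM (f p)).comp g') + ((crossCLM.comp f').flip (g p))) p := by
  have h1 : HasFDerivAt (fun q => crossCLM (f q)) (crossCLM.comp f') p :=
    crossCLM.hasFDerivAt.comp p hf
  exact h1.clm_apply hg

lemma div3_eq_sum (f : E3 → E3) (p : E3) :
    div3 f p = ∑ i : Fin 3, fderiv ℝ f p (e3 i) i := by
  rw [div3, LinearMap.trace_eq_matrix_trace ℝ (PiLp.basisFun 2 ℝ (Fin 3)), Matrix.trace]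
  apply Finset.sum_congr rfl
  intro i _
  rw [Matrix.diag_apply, LinearMap.toMatrix_apply, PiLp.basisFun_repr, PiLp.basisFun_apply]
  rfl

/-- Surface curl equals minus the surface divergence of the rotated field:
`Rot_S v = −Div_S(ν × v)` where `ν = ∇d` is the unit normal of the level
surfaces of an eikonal function `d`. -/
theorem rotSurf_eq_neg_divSurf_rotated
    (U : Set E3) (hU : IsOpen U) (d : E3 → ℝ)
    (hd : ContDiffOn ℝ 2 d U)
    (heik : ∀ q ∈ U, ‖gradient d q‖ = 1)
    (v : E3 → E3) (hv : DifferentiableOn ℝ v U) :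
    ∀ p ∈ U,
      ⟪curl3 v p, gradient d p⟫ =
        -(div3 (fun q => cross3 (gradient d q) (v q)) p -
           ⟪gradient d p,
             fderiv ℝ (fun q => cross3 (gradient d q) (v q)) p (gradient d p)⟫) := by
  intro p hp
  have hUp : U ∈ nhds p := hU.mem_nhds hp
  have hd2 : ContDiffAt ℝ 2 d p := hd.contDiffAt hUp
  have hd'1 : ContDiffAt ℝ 1 (fderiv ℝ d) p := hd2.fderiv_right (by norm_num)
  have hd'diff : DifferentiableAt ℝ (fderiv ℝ d) p := hd'1.differentiableAt one_ne_zero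
  have hgrad : gradient d = (⇑(InnerProductSpace.toDual ℝ E3).symm ∘ fderiv ℝ d) := rfl
  have hν : DifferentiableAt ℝ (gradient d) p := by
    rw [hgrad]
    exact ((InnerProductSpace.toDual ℝ E3).symm.differentiable.differentiableAt).comp p hd'diff
  set n : E3 := gradient d p with hn
  set N : E3 →L[ℝ] E3 := fderiv ℝ (gradient d) p with hNdef
  set V : E3 →L[ℝ] E3 := fderiv ℝ v p with hVdef
  -- symmetry of the Hessian
  have hsym : ∀ u w : E3, ⟪N u, w⟫ = ⟪N w, u⟫ := by
    have hNa : ∀ u : E3, N u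
        = (InnerProductSpace.toDual ℝ E3).symm (fderiv ℝ (fderiv ℝ d) p u) := by
      intro u
      rw [hNdef, hgrad, LinearIsometryEquiv.comp_fderiv]
      rfl
    have hs := hd2.isSymmSndFDerivAt (by simp)
    intro u w
    rw [hNa, hNa, InnerProductSpace.toDual_symm_apply, InnerProductSpace.toDual_symm_apply]
    exact hs u w
  -- Hessian applied to the normal direction vanishes
  have h1 : ∀ u : E3, ⟪N u, n⟫ = 0 := by
    intro u
    have hgg : HasFDerivAt (fun q => ⟪gradient d q, gradient d q⟫)
        ((fderivInnerCLM ℝ (n, n)).comp (N.prod N)) p :=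
      hν.hasFDerivAt.inner ℝ hν.hasFDerivAt
    have hconst : (fun q => ⟪gradient d q, gradient d q⟫) =ᶠ[nhds p] fun _ => (1:ℝ) := by
      filter_upwards [hUp] with q hq
      rw [real_inner_self_eq_norm_mul_norm, heik q hq]; norm_num
    have hzero : fderiv ℝ (fun q => ⟪gradient d q, gradient d q⟫) p = 0 := by
      rw [hconst.fderiv_eq]; exact fderiv_const_apply 1
    have h0 := hgg.fderiv
    rw [hzero] at h0
    have h2 := congrArg (fun L : E3 →L[ℝ] ℝ => L u) h0.symm
    simp only [ContinuousLinearMap.comp_apply, ContinuousLinearMap.prod_apply,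
      fderivInnerCLM_apply, ContinuousLinearMap.zero_apply] at h2
    have := real_inner_comm n (N u)
    linarith
  have inner_e3 : ∀ (x : E3) (i : Fin 3), ⟪x, e3 i⟫ = x i := by
    intro x i
    simp [e3, PiLp.inner_apply, EuclideanSpace.single_apply]
  have hNn : ∀ i : Fin 3, N n i = 0 := by
    intro i
    rw [← inner_e3 (N n) i, hsym n (e3 i), h1 (e3 i)]
  have ha : ∀ i j : Fin 3, N (e3 j) i = N (e3 i) j := by
    intro i j
    rw [← inner_e3 (N (e3 j)) i, hsym (e3 j) (e3 i), inner_e3]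
  have hvd : DifferentiableAt ℝ v p := hv.differentiableAt hUp
  have hw : HasFDerivAt (fun q => cross3 (gradient d q) (v q))
      (((crossCLM n).comp V) + ((crossCLM.comp N).flip (v p))) p :=
    hasFDerivAt_cross hν.hasFDerivAt hvd.hasFDerivAt
  have hfw := hw.fderiv
  rw [div3_eq_sum, hfw]
  simp only [ContinuousLinearMap.add_apply, ContinuousLinearMap.comp_apply,
    ContinuousLinearMap.flip_apply, crossCLM_apply,
    curl3, cross3, vec3, PiLp.inner_apply, RCLike.inner_apply, conj_trivial,
    Fin.sum_univ_three, WithLp.equiv_symm_apply, PiLp.toLp_apply, Matrix.cons_val_zero,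
    Matrix.cons_val_one, Matrix.head_cons, Matrix.cons_val_two, Matrix.tail_cons,
    PiLp.add_apply, hNn, ← hVdef]
  ring_nf
  linear_combination (v p 0) * (ha 2 1) + (v p 1) * (ha 0 2) + (v p 2) * (ha 1 0)
end
end

section
/- Let U ⊆ ℝ³ be open, let d : ℝ³ → ℝ be C² on U with ‖∇d(q)‖ = 1 for all q ∈ U, and set ν = ∇d. Let v : ℝ³ → ℝ³ be differentiable on U and let p ∈ U be a point where v is tangential, i.e. v(p)·ν(p) = 0. Then the surface divergence of v equals the surface curl of the rotated field ν × v: div v(p) − ν(p)·( Dv(p) ν(p) ) = (curl(ν × v))(p)·ν(p). (This is the identity Div_S v = Rot_S(ν × v) used in the paper to pass from the velocity v to the rotated unknown w = ν × v.) -/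
noncomputable section
open RealInnerProductSpace

lemma inner3 (x y : E3) : ⟪x, y⟫ = x 0 * y 0 + x 1 * y 1 + x 2 * y 2 := by
  simp [PiLp.inner_apply, Fin.sum_univ_three]
  ring

lemma trace3 (B : E3 →ₗ[ℝ] E3) :
    LinearMap.trace ℝ E3 B = B (e3 0) 0 + B (e3 1) 1 + B (e3 2) 2 := by
  rw [LinearMap.trace_eq_matrix_trace ℝ (EuclideanSpace.basisFun (Fin 3) ℝ).toBasis B]
  simp [Matrix.trace, LinearMap.toMatrix_apply, Fin.sum_univ_three, Matrix.diag,
    OrthonormalBasis.coe_toBasis_repr_apply, OrthonormalBasis.coe_toBasis,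
    EuclideanSpace.basisFun_repr, EuclideanSpace.basisFun_apply, e3]

lemma decomp3 (x : E3) : x = x 0 • e3 0 + x 1 • e3 1 + x 2 • e3 2 := by
  ext i; fin_cases i <;> simp [e3, EuclideanSpace.single_apply]

lemma clm_decomp (T : E3 →L[ℝ] E3) (x : E3) :
    T x = x 0 • T (e3 0) + x 1 • T (e3 1) + x 2 • T (e3 2) := by
  conv_lhs => rw [decomp3 x]
  simp

/-- Derivative of a coordinate of a differentiable field. -/
lemma hasFDerivAt_coord {f : E3 → E3} {A : E3 →L[ℝ] E3} {p : E3}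
    (hf : HasFDerivAt f A p) (k : Fin 3) :
    HasFDerivAt (fun q => f q k) ((EuclideanSpace.proj k (𝕜 := ℝ)).comp A) p :=
  (EuclideanSpace.proj k (𝕜 := ℝ)).hasFDerivAt.comp p hf

/-- Derivative of the "determinant-like" coordinates of a cross product field. -/
lemma hasFDerivAt_cross_coord {f g : E3 → E3} {A B : E3 →L[ℝ] E3} {p : E3}
    (hf : HasFDerivAt f A p) (hg : HasFDerivAt g B p) (k l : Fin 3) :
    HasFDerivAt (fun q => f q k * g q l - f q l * g q k)
      ((f p k • ((EuclideanSpace.proj l (𝕜 := ℝ)).comp B)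
          + g p l • ((EuclideanSpace.proj k (𝕜 := ℝ)).comp A))
        - (f p l • ((EuclideanSpace.proj k (𝕜 := ℝ)).comp B)
          + g p k • ((EuclideanSpace.proj l (𝕜 := ℝ)).comp A))) p :=
  ((hasFDerivAt_coord hf k).mul (hasFDerivAt_coord hg l)).sub
    ((hasFDerivAt_coord hf l).mul (hasFDerivAt_coord hg k))

/-- Coordinates of the derivative of a cross-product field (Leibniz rule). -/
lemma fderiv_cross_coord {f g : E3 → E3} {A B : E3 →L[ℝ] E3} {p : E3}
    (hf : HasFDerivAt f A p) (hg : HasFDerivAt g B p) (j k l : Fin 3)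
    (hj : ∀ a b : E3, cross3 a b j = a k * b l - a l * b k) (u : E3) :
    fderiv ℝ (fun q => cross3 (f q) (g q)) p u j
      = f p k * B u l + g p l * A u k - (f p l * B u k + g p k * A u l) := by
  have hdiff : DifferentiableAt ℝ (fun q => cross3 (f q) (g q)) p := by
    rw [← (EuclideanSpace.equiv (Fin 3) ℝ).comp_differentiableAt_iff]
    refine differentiableAt_pi.mpr fun i => ?_
    fin_cases i
    · exact (hasFDerivAt_cross_coord hf hg 1 2).differentiableAt
    · exact (hasFDerivAt_cross_coord hf hg 2 0).differentiableAt
    · exact (hasFDerivAt_cross_coord hf hg 0 1).differentiableAt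
  have h1 : HasFDerivAt (fun q => cross3 (f q) (g q) j)
      ((EuclideanSpace.proj j (𝕜 := ℝ)).comp
        (fderiv ℝ (fun q => cross3 (f q) (g q)) p)) p :=
    (EuclideanSpace.proj j (𝕜 := ℝ)).hasFDerivAt.comp p hdiff.hasFDerivAt
  have h2 : HasFDerivAt (fun q => cross3 (f q) (g q) j)
      ((f p k • ((EuclideanSpace.proj l (𝕜 := ℝ)).comp B)
          + g p l • ((EuclideanSpace.proj k (𝕜 := ℝ)).comp A))
        - (f p l • ((EuclideanSpace.proj k (𝕜 := ℝ)).comp B)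
          + g p k • ((EuclideanSpace.proj l (𝕜 := ℝ)).comp A))) p := by
    have := hasFDerivAt_cross_coord hf hg k l
    simpa only [← hj] using this
  have heq := h1.unique h2
  have happ := congrArg (fun (T : E3 →L[ℝ] ℝ) => T u) heq
  simpa using happ

/-- Surface divergence equals the surface curl of the rotated field:
`Div_S v = Rot_S(ν × v)` at a point where `v` is tangential, with `ν = ∇d`
the unit normal of the level surfaces of an eikonal function `d`. -/
theorem divSurf_eq_rotSurf_rotated
    (U : Set E3) (hU : IsOpen U) (d : E3 → ℝ)
    (hd : ContDiffOn ℝ 2 d U)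
    (heik : ∀ q ∈ U, ‖gradient d q‖ = 1)
    (v : E3 → E3) (hv : DifferentiableOn ℝ v U)
    (p : E3) (hp : p ∈ U) (htan : ⟪v p, gradient d p⟫ = 0) :
    div3 v p - ⟪gradient d p, fderiv ℝ v p (gradient d p)⟫ =
      ⟪curl3 (fun q => cross3 (gradient d q) (v q)) p, gradient d p⟫ := by
  set ν : E3 → E3 := gradient d with hν_def
  -- coordinates of the gradient
  have hgi : ∀ (q : E3) (i : Fin 3), ν q i = fderiv ℝ d q (e3 i) := by
    intro q i
    have h : ⟪ν q, e3 i⟫ = fderiv ℝ d q (e3 i) :=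
      InnerProductSpace.toDual_symm_apply
    rw [inner3] at h
    fin_cases i <;>
      simpa [e3, EuclideanSpace.single_apply] using h
  -- ν is differentiable at p
  have h1 : ContDiffOn ℝ 1 (fderiv ℝ d) U := hd.fderiv_of_isOpen hU (by norm_num)
  have hfd : DifferentiableAt ℝ (fderiv ℝ d) p :=
    (h1.differentiableOn one_ne_zero).differentiableAt (hU.mem_nhds hp)
  have hνd : DifferentiableAt ℝ ν p := by
    rw [← (EuclideanSpace.equiv (Fin 3) ℝ).comp_differentiableAt_iff]
    refine differentiableAt_pi.mpr fun i => ?_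
    exact (hfd.clm_apply (differentiableAt_const (e3 i))).congr_of_eventuallyEq
      (Filter.Eventually.of_forall fun q => hgi q i)
  have hvd : DifferentiableAt ℝ v p := hv.differentiableAt (hU.mem_nhds hp)
  set A : E3 →L[ℝ] E3 := fderiv ℝ ν p with hA_def
  set B : E3 →L[ℝ] E3 := fderiv ℝ v p with hB_def
  have hνA : HasFDerivAt ν A p := hνd.hasFDerivAt
  have hvB : HasFDerivAt v B p := hvd.hasFDerivAt
  -- differentiating ⟪ν, ν⟫ = 1 gives ⟪A u, ν p⟫ = 0
  have hAn : ∀ u : E3, ⟪A u, ν p⟫ = 0 := by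
    intro u
    have hconst : (fun q => ⟪ν q, ν q⟫) =ᶠ[nhds p] (fun _ => (1 : ℝ)) := by
      filter_upwards [hU.mem_nhds hp] with q hq
      have : ‖ν q‖ = 1 := heik q hq
      rw [real_inner_self_eq_norm_sq, this]; norm_num
    have h0 : HasFDerivAt (fun q => ⟪ν q, ν q⟫) (0 : E3 →L[ℝ] ℝ) p :=
      (hasFDerivAt_const (1 : ℝ) p).congr_of_eventuallyEq hconst
    have h1' : HasFDerivAt (fun q => ⟪ν q, ν q⟫)
        ((fderivInnerCLM ℝ (ν p, ν p)).comp (A.prod A)) p := hνA.inner ℝ hνA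
    have heq := h1'.unique h0
    have happ := congrArg (fun (T : E3 →L[ℝ] ℝ) => T u) heq
    simp only [ContinuousLinearMap.comp_apply, ContinuousLinearMap.prod_apply,
      fderivInnerCLM_apply, ContinuousLinearMap.zero_apply] at happ
    have hsymm : ⟪ν p, A u⟫ = ⟪A u, ν p⟫ := real_inner_comm _ _
    linarith [happ, hsymm]
  -- the coordinates of the derivative of the cross-product field
  have hc0 := fderiv_cross_coord hνA hvB 0 1 2 (fun a b => rfl)
  have hc1 := fderiv_cross_coord hνA hvB 1 2 0 (fun a b => rfl)
  have hc2 := fderiv_cross_coord hνA hvB 2 0 1 (fun a b => rfl)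
  -- expand everything into coordinates
  have hdiv : div3 v p = B (e3 0) 0 + B (e3 1) 1 + B (e3 2) 2 := trace3 _
  have hBn : B (ν p) = ν p 0 • B (e3 0) + ν p 1 • B (e3 1) + ν p 2 • B (e3 2) :=
    clm_decomp B (ν p)
  have hnorm : ν p 0 * ν p 0 + ν p 1 * ν p 1 + ν p 2 * ν p 2 = 1 := by
    have h1'' : ⟪ν p, ν p⟫ = (1 : ℝ) := by
      rw [real_inner_self_eq_norm_sq, heik p hp]; norm_num
    rw [inner3] at h1''; exact h1''
  have htan' : v p 0 * ν p 0 + v p 1 * ν p 1 + v p 2 * ν p 2 = 0 := by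
    rw [inner3] at htan; exact htan
  have hA0 := hAn (e3 0)
  have hA1 := hAn (e3 1)
  have hA2 := hAn (e3 2)
  rw [inner3] at hA0 hA1 hA2
  rw [hdiv]
  simp only [inner3]
  rw [hBn]
  simp only [curl3, vec3, WithLp.equiv_symm_apply, WithLp.ofLp_toLp, Matrix.cons_val_zero,
    Matrix.cons_val_one, Matrix.head_cons, Matrix.cons_val_two, Matrix.tail_cons,
    PiLp.add_apply, PiLp.smul_apply, smul_eq_mul, hc0, hc1, hc2]
  linear_combination (-(B (e3 0) 0 + B (e3 1) 1 + B (e3 2) 2)) * hnorm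
    + (A (e3 0) 0 + A (e3 1) 1 + A (e3 2) 2) * htan'
    - v p 0 * hA0 - v p 1 * hA1 - v p 2 * hA2
end
end

section
/- Let R = 2 and r = 1/2, and let p = (x, y, z) satisfy T(p) = 0 (which forces x² + z² > 0). Then the field v_θ is tangent to the torus: ∇T(p) · v_θ(p) = 0, where v_θ(x,y,z) = (1/(2s))·(−xy/s, s − 2, −yz/s) with s = √(x²+z²). -/
noncomputable section
open RealInnerProductSpace

/-- The torus level function `T(x,y,z) = (x² + y² + z² + R² − r²)² − 4R²(x² + z²)`. -/
def torusT (R r : ℝ) (p : E3) : ℝ :=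
  (p 0 ^ 2 + p 1 ^ 2 + p 2 ^ 2 + R ^ 2 - r ^ 2) ^ 2 - 4 * R ^ 2 * (p 0 ^ 2 + p 2 ^ 2)


/-- The second harmonic vector field on the torus (with `R = 2`, `r = 1/2`):
`v_θ(x,y,z) = (1/(2s))·(−xy/s, s − 2, −yz/s)` with `s = √(x²+z²)`. -/
def vTheta (p : E3) : E3 :=
  (1 / (2 * Real.sqrt (p 0 ^ 2 + p 2 ^ 2))) •
    vec3 (-(p 0 * p 1) / Real.sqrt (p 0 ^ 2 + p 2 ^ 2))
         (Real.sqrt (p 0 ^ 2 + p 2 ^ 2) - 2)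
         (-(p 1 * p 2) / Real.sqrt (p 0 ^ 2 + p 2 ^ 2))

set_option maxHeartbeats 2000000 in
/-- On the torus `{T = 0}` with `R = 2`, `r = 1/2`, the field `v_θ` is tangent:
`∇T(p) · v_θ(p) = 0`. -/
theorem vTheta_tangent (p : E3) (hp : torusT 2 (1 / 2) p = 0) :
    ⟪gradient (torusT 2 (1 / 2)) p, vTheta p⟫ = 0 := by
  set v := vTheta p with hv
  set x := p 0 with hx
  set y := p 1 with hy
  set z := p 2 with hz
  set s := Real.sqrt (p 0 ^ 2 + p 2 ^ 2) with hsdef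
  have hT' : (x ^ 2 + y ^ 2 + z ^ 2 + (2:ℝ) ^ 2 - (1/2) ^ 2) ^ 2 = 16 * (x ^ 2 + z ^ 2) := by
    have := hp
    unfold torusT at this
    linarith
  have hxz : (0:ℝ) < x ^ 2 + z ^ 2 := by nlinarith [sq_nonneg x, sq_nonneg y, sq_nonneg z]
  have hs2 : s ^ 2 = x ^ 2 + z ^ 2 := Real.sq_sqrt (by positivity)
  have hs : 0 < s := Real.sqrt_pos.2 hxz
  have hA4 : x ^ 2 + y ^ 2 + z ^ 2 + (2:ℝ) ^ 2 - (1/2) ^ 2 = 4 * s := by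
    nlinarith [sq_nonneg (x ^ 2 + y ^ 2 + z ^ 2 + (2:ℝ) ^ 2 - (1/2) ^ 2 - 4 * s)]
  -- components of v
  have hv0 : v 0 = 1 / (2 * s) * (-(x * y) / s) := by
    rw [hv]; simp [vTheta, vec3, PiLp.smul_apply, smul_eq_mul]; rfl
  have hv1 : v 1 = 1 / (2 * s) * (s - 2) := by
    rw [hv]; simp [vTheta, vec3, PiLp.smul_apply, smul_eq_mul]; rfl
  have hv2 : v 2 = 1 / (2 * s) * (-(y * z) / s) := by
    rw [hv]; simp [vTheta, vec3, PiLp.smul_apply, smul_eq_mul]; rfl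
  -- differentiability
  have h0 : DifferentiableAt ℝ (fun q : E3 => q 0) p :=
    (EuclideanSpace.proj (0 : Fin 3) : E3 →L[ℝ] ℝ).differentiableAt
  have h1 : DifferentiableAt ℝ (fun q : E3 => q 1) p :=
    (EuclideanSpace.proj (1 : Fin 3) : E3 →L[ℝ] ℝ).differentiableAt
  have h2 : DifferentiableAt ℝ (fun q : E3 => q 2) p :=
    (EuclideanSpace.proj (2 : Fin 3) : E3 →L[ℝ] ℝ).differentiableAt
  have hdiff : DifferentiableAt ℝ (torusT 2 (1/2)) p := by
    unfold torusT
    exact ((((((h0.pow 2).add (h1.pow 2)).add (h2.pow 2)).add_const ((2:ℝ) ^ 2)).sub_const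
      ((1/2:ℝ) ^ 2)).pow 2).sub (((h0.pow 2).add (h2.pow 2)).const_mul (4 * 2 ^ 2))
  -- reduce inner product to directional derivative
  have hgrad : ⟪gradient (torusT 2 (1/2)) p, v⟫ = fderiv ℝ (torusT 2 (1/2)) p v := by
    rw [gradient]; exact InnerProductSpace.toDual_symm_apply
  -- the line through p in direction v
  have hline : HasDerivAt (fun t : ℝ => p + t • v) v 0 := by
    simpa using ((hasDerivAt_id (0:ℝ)).smul_const v).const_add p
  have h00 : p + (0:ℝ) • v = p := by simp
  have hF : HasFDerivAt (torusT 2 (1/2)) (fderiv ℝ (torusT 2 (1/2)) p) (p + (0:ℝ) • v) := by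
    rw [h00]; exact hdiff.hasFDerivAt
  have hcomp := hF.comp_hasDerivAt 0 hline
  -- explicit 1-D derivatives
  have ha : HasDerivAt (fun t : ℝ => x + t * v 0) (v 0) 0 := by
    simpa using ((hasDerivAt_id (0:ℝ)).mul_const (v 0)).const_add x
  have hb : HasDerivAt (fun t : ℝ => y + t * v 1) (v 1) 0 := by
    simpa using ((hasDerivAt_id (0:ℝ)).mul_const (v 1)).const_add y
  have hc : HasDerivAt (fun t : ℝ => z + t * v 2) (v 2) 0 := by
    simpa using ((hasDerivAt_id (0:ℝ)).mul_const (v 2)).const_add z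
  have hg := ((((((ha.pow 2).add (hb.pow 2)).add (hc.pow 2)).add_const ((2:ℝ) ^ 2)).sub_const
      ((1/2:ℝ) ^ 2)).pow 2).sub (((ha.pow 2).add (hc.pow 2)).const_mul (4 * 2 ^ 2))
  have hfun : (fun t : ℝ => torusT 2 (1/2) (p + t • v)) =
      (fun t : ℝ => ((x + t * v 0) ^ 2 + (y + t * v 1) ^ 2 + (z + t * v 2) ^ 2 + (2:ℝ) ^ 2
        - (1/2:ℝ) ^ 2) ^ 2 - 4 * 2 ^ 2 * ((x + t * v 0) ^ 2 + (z + t * v 2) ^ 2)) := by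
    funext t
    simp [torusT, PiLp.add_apply, PiLp.smul_apply, smul_eq_mul, hx, hy, hz]
  simp only [Function.comp_def] at hcomp
  rw [hfun] at hcomp
  have hDeq := hcomp.unique hg
  rw [hgrad, hDeq, hv0, hv1, hv2]
  norm_num
  have hsne : s ≠ 0 := ne_of_gt hs
  field_simp
  linear_combination (2 * y * (4 * (x ^ 2 + y ^ 2 + z ^ 2 + 4) - 1) - 64 * y) * hs2
    + (-16 * s * y) * hA4
end
end

section
/- For all real R, r and every p = (x, y, z) with x² + z² ≠ 0, the normal–normal part of the Jacobian of v_φ vanishes in the direction of ∇T: ∇T(p) · ( Dv_φ(p) ∇T(p) ) = 0, where v_φ(x,y,z) = (1/(4(x²+z²)))·(−z, 0, x). Combined with div v_φ = 0, this shows that the surface divergence Div_S v_φ = div v_φ − ν·(Dv_φ ν) vanishes on every level surface of T with unit normal ν = ∇T/‖∇T‖, so v_φ is a harmonic (divergence- and curl-free) tangential field on the torus. -/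
noncomputable section
open RealInnerProductSpace

/-- The first harmonic vector field on the torus:
`v_φ(x,y,z) = (1/(4(x²+z²)))·(−z, 0, x)`. -/
def vPhi (p : E3) : E3 :=
  (1 / (4 * (p 0 ^ 2 + p 2 ^ 2))) • vec3 (-(p 2)) 0 (p 0)

lemma inner_gradient_apply (f : E3 → ℝ) (p w : E3) :
    ⟪gradient f p, w⟫ = fderiv ℝ f p w := by
  rw [gradient]
  exact InnerProductSpace.toDual_symm_apply

lemma vPhi_eq : vPhi = fun q : E3 =>
    (-(q 2) * (4 * (q 0 ^ 2 + q 2 ^ 2))⁻¹) • e3 0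
      + (q 0 * (4 * (q 0 ^ 2 + q 2 ^ 2))⁻¹) • e3 2 := by
  funext q
  ext i
  fin_cases i <;>
    simp [vPhi, vec3, e3, EuclideanSpace.single_apply, Fin.isValue] <;> ring

lemma inner_e3 (v : E3) (i : Fin 3) : ⟪v, e3 i⟫ = v i := by
  simp [e3, EuclideanSpace.inner_single_right]

set_option maxHeartbeats 2000000 in
/-- The normal–normal part of the Jacobian of `v_φ` vanishes in the direction of
`∇T`: `∇T(p) · (Dv_φ(p) ∇T(p)) = 0` away from the y-axis. -/
theorem vPhi_normal_normal_jacobian_eq_zero (R r : ℝ) (p : E3)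
    (hp : p 0 ^ 2 + p 2 ^ 2 ≠ 0) :
    ⟪gradient (torusT R r) p, fderiv ℝ vPhi p (gradient (torusT R r) p)⟫ = 0 := by
  have h4g : (4 : ℝ) * (p 0 ^ 2 + p 2 ^ 2) ≠ 0 := by
    exact mul_ne_zero four_ne_zero hp
  have h0 : HasFDerivAt (fun q : E3 => q 0) (EuclideanSpace.proj (𝕜 := ℝ) (0 : Fin 3)) p := by
    exact (EuclideanSpace.proj (𝕜 := ℝ) (0 : Fin 3)).hasFDerivAt
  have h1 : HasFDerivAt (fun q : E3 => q 1) (EuclideanSpace.proj (𝕜 := ℝ) (1 : Fin 3)) p := by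
    exact (EuclideanSpace.proj (𝕜 := ℝ) (1 : Fin 3)).hasFDerivAt
  have h2 : HasFDerivAt (fun q : E3 => q 2) (EuclideanSpace.proj (𝕜 := ℝ) (2 : Fin 3)) p := by
    exact (EuclideanSpace.proj (𝕜 := ℝ) (2 : Fin 3)).hasFDerivAt
  have h0sq : HasFDerivAt (fun q : E3 => q 0 ^ 2)
      ((2 * p 0) • (EuclideanSpace.proj (𝕜 := ℝ) (0 : Fin 3))) p := by
    simpa [Function.comp_def] using (hasDerivAt_pow 2 (p 0)).comp_hasFDerivAt p h0
  have h1sq : HasFDerivAt (fun q : E3 => q 1 ^ 2)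
      ((2 * p 1) • (EuclideanSpace.proj (𝕜 := ℝ) (1 : Fin 3))) p := by
    simpa [Function.comp_def] using (hasDerivAt_pow 2 (p 1)).comp_hasFDerivAt p h1
  have h2sq : HasFDerivAt (fun q : E3 => q 2 ^ 2)
      ((2 * p 2) • (EuclideanSpace.proj (𝕜 := ℝ) (2 : Fin 3))) p := by
    simpa [Function.comp_def] using (hasDerivAt_pow 2 (p 2)).comp_hasFDerivAt p h2
  -- derivative of the torus level function
  have hSsq := (((h0sq.add h1sq).add h2sq).add_const (R ^ 2)).sub_const (r ^ 2)
  have hS2 := (hasDerivAt_pow 2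
    (p 0 ^ 2 + p 1 ^ 2 + p 2 ^ 2 + R ^ 2 - r ^ 2)).comp_hasFDerivAt p hSsq
  have hT : HasFDerivAt (𝕜 := ℝ) (torusT R r) _ p := hS2.sub ((h0sq.add h2sq).const_mul (4 * R ^ 2))
  -- derivative of vPhi
  have hg : HasFDerivAt (𝕜 := ℝ) (fun q : E3 => 4 * (q 0 ^ 2 + q 2 ^ 2)) _ p :=
    (h0sq.add h2sq).const_mul 4
  have hinv := (hasDerivAt_inv h4g).comp_hasFDerivAt p hg
  have hq0 : HasFDerivAt (fun q : E3 => -(q 2) * (4 * (q 0 ^ 2 + q 2 ^ 2))⁻¹)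
      ((-p 2) • (-((4 * (p 0 ^ 2 + p 2 ^ 2)) ^ 2)⁻¹ • (4 : ℝ) •
          ((2 * p 0) • EuclideanSpace.proj (𝕜 := ℝ) (0 : Fin 3)
            + (2 * p 2) • EuclideanSpace.proj (𝕜 := ℝ) (2 : Fin 3)))
        + (4 * (p 0 ^ 2 + p 2 ^ 2))⁻¹ • (-(EuclideanSpace.proj (𝕜 := ℝ) (2 : Fin 3)))) p :=
    h2.neg.mul hinv
  have hq2 : HasFDerivAt (fun q : E3 => q 0 * (4 * (q 0 ^ 2 + q 2 ^ 2))⁻¹)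
      ((p 0) • (-((4 * (p 0 ^ 2 + p 2 ^ 2)) ^ 2)⁻¹ • (4 : ℝ) •
          ((2 * p 0) • EuclideanSpace.proj (𝕜 := ℝ) (0 : Fin 3)
            + (2 * p 2) • EuclideanSpace.proj (𝕜 := ℝ) (2 : Fin 3)))
        + (4 * (p 0 ^ 2 + p 2 ^ 2))⁻¹ • (EuclideanSpace.proj (𝕜 := ℝ) (0 : Fin 3))) p :=
    h0.mul hinv
  have hV : HasFDerivAt (fun q : E3 =>
      (-(q 2) * (4 * (q 0 ^ 2 + q 2 ^ 2))⁻¹) • e3 0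
        + (q 0 * (4 * (q 0 ^ 2 + q 2 ^ 2))⁻¹) • e3 2)
      (((-p 2) • (-((4 * (p 0 ^ 2 + p 2 ^ 2)) ^ 2)⁻¹ • (4 : ℝ) •
          ((2 * p 0) • EuclideanSpace.proj (𝕜 := ℝ) (0 : Fin 3)
            + (2 * p 2) • EuclideanSpace.proj (𝕜 := ℝ) (2 : Fin 3)))
        + (4 * (p 0 ^ 2 + p 2 ^ 2))⁻¹ • (-(EuclideanSpace.proj (𝕜 := ℝ) (2 : Fin 3)))).smulRight (e3 0)
       + ((p 0) • (-((4 * (p 0 ^ 2 + p 2 ^ 2)) ^ 2)⁻¹ • (4 : ℝ) •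
          ((2 * p 0) • EuclideanSpace.proj (𝕜 := ℝ) (0 : Fin 3)
            + (2 * p 2) • EuclideanSpace.proj (𝕜 := ℝ) (2 : Fin 3)))
        + (4 * (p 0 ^ 2 + p 2 ^ 2))⁻¹ • (EuclideanSpace.proj (𝕜 := ℝ) (0 : Fin 3))).smulRight (e3 2)) p :=
    (hq0.smul_const (e3 0)).add (hq2.smul_const (e3 2))
  set G := gradient (torusT R r) p with hGdef
  have hG0 : G 0 = (2 * (p 0 ^ 2 + p 1 ^ 2 + p 2 ^ 2 + R ^ 2 - r ^ 2)) * (2 * p 0)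
      - 4 * R ^ 2 * (2 * p 0) := by
    rw [← inner_e3 G 0, hGdef, inner_gradient_apply, hT.fderiv]
    simp [e3, EuclideanSpace.single_apply, Fin.isValue, smul_smul]
  have hG2 : G 2 = (2 * (p 0 ^ 2 + p 1 ^ 2 + p 2 ^ 2 + R ^ 2 - r ^ 2)) * (2 * p 2)
      - 4 * R ^ 2 * (2 * p 2) := by
    rw [← inner_e3 G 2, hGdef, inner_gradient_apply, hT.fderiv]
    simp [e3, EuclideanSpace.single_apply, Fin.isValue, smul_smul]
  rw [vPhi_eq, hV.fderiv]
  simp only [ContinuousLinearMap.add_apply, ContinuousLinearMap.smulRight_apply,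
    ContinuousLinearMap.smul_apply, ContinuousLinearMap.neg_apply,
    ContinuousLinearMap.coe_smul', Pi.smul_apply, smul_eq_mul,
    inner_add_right, real_inner_smul_right, inner_e3]
  rw [hG0, hG2]
  field_simp
  simp only [PiLp.proj_apply, hG0, hG2]
  ring
end
end

section
/- The vector field v_θ(x,y,z) = (1/(2s))·(−xy/s, s − 2, −yz/s), s = √(x²+z²), is divergence-free away from the y-axis: for every p = (x, y, z) with x² + z² ≠ 0, div v_θ(p) = 0. -/
noncomputable section
open RealInnerProductSpace

set_option maxHeartbeats 2000000 in
/-- The field `v_θ` is divergence-free away from the y-axis. -/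
theorem vTheta_div_free (p : E3) (hp : p 0 ^ 2 + p 2 ^ 2 ≠ 0) :
    div3 vTheta p = 0 := by
  classical
  have hu0 : (0:ℝ) ≤ p 0 ^ 2 + p 2 ^ 2 := by positivity
  have hupos : (0:ℝ) < p 0 ^ 2 + p 2 ^ 2 := lt_of_le_of_ne hu0 (Ne.symm hp)
  have hspos : 0 < Real.sqrt (p 0 ^ 2 + p 2 ^ 2) := Real.sqrt_pos.2 hupos
  have hs : Real.sqrt (p 0 ^ 2 + p 2 ^ 2) ≠ 0 := ne_of_gt hspos
  -- coordinate projections and basic derivatives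
  have hx := (PiLp.proj (𝕜 := ℝ) 2 (fun _ : Fin 3 => ℝ) 0).hasFDerivAt (x := p)
  have hy := (PiLp.proj (𝕜 := ℝ) 2 (fun _ : Fin 3 => ℝ) 1).hasFDerivAt (x := p)
  have hz := (PiLp.proj (𝕜 := ℝ) 2 (fun _ : Fin 3 => ℝ) 2).hasFDerivAt (x := p)
  have hU := (hx.mul hx).add (hz.mul hz)
  simp only [PiLp.proj_apply, ← pow_two] at hU hx hy hz
  have hU' : HasFDerivAt (fun q : E3 => q 0 ^ 2 + q 2 ^ 2) _ p := hU
  have hS := hU'.sqrt hp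
  have hUne : (2 * (p 0 ^ 2 + p 2 ^ 2)) ≠ 0 := by positivity
  have hSne : (2 * Real.sqrt (p 0 ^ 2 + p 2 ^ 2)) ≠ 0 := by positivity
  have hinvU := (hasDerivAt_inv hUne).comp_hasFDerivAt p (hU'.const_mul 2)
  have hinvS := (hasDerivAt_inv hSne).comp_hasFDerivAt p (hS.const_mul 2)
  have h0 := ((hx.mul hy).neg).mul hinvU
  have h1 := (hS.sub_const 2).mul hinvS
  have h2 := ((hy.mul hz).neg).mul hinvU
  simp only [PiLp.proj_apply, Function.comp] at h0 h1 h2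
  set φ : Fin 3 → E3 → ℝ :=
    ![fun q => -(q 0 * q 1) * (2 * (q 0 ^ 2 + q 2 ^ 2))⁻¹,
      fun q => (Real.sqrt (q 0 ^ 2 + q 2 ^ 2) - 2) * (2 * Real.sqrt (q 0 ^ 2 + q 2 ^ 2))⁻¹,
      fun q => -(q 1 * q 2) * (2 * (q 0 ^ 2 + q 2 ^ 2))⁻¹] with hφ
  have hφ0 : φ 0 = fun q : E3 => -(q 0 * q 1) * (2 * (q 0 ^ 2 + q 2 ^ 2))⁻¹ := rfl
  have hφ1 : φ 1 = fun q : E3 =>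
      (Real.sqrt (q 0 ^ 2 + q 2 ^ 2) - 2) * (2 * Real.sqrt (q 0 ^ 2 + q 2 ^ 2))⁻¹ := rfl
  have hφ2 : φ 2 = fun q : E3 => -(q 1 * q 2) * (2 * (q 0 ^ 2 + q 2 ^ 2))⁻¹ := rfl
  have hdiff : ∀ i, HasFDerivAt (φ i) (fderiv ℝ (φ i) p) p := by
    intro i
    fin_cases i
    · exact (show HasFDerivAt (φ 0) _ p from h0).differentiableAt.hasFDerivAt
    · exact (show HasFDerivAt (φ 1) _ p from h1).differentiableAt.hasFDerivAt
    · exact (show HasFDerivAt (φ 2) _ p from h2).differentiableAt.hasFDerivAt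
  have hVpi : HasFDerivAt (fun q i => φ i q)
      (ContinuousLinearMap.pi fun i => fderiv ℝ (φ i) p) p := hasFDerivAt_pi.2 hdiff
  set Φ : (Fin 3 → ℝ) →L[ℝ] E3 :=
    ((PiLp.continuousLinearEquiv 2 ℝ (fun _ : Fin 3 => ℝ)).symm : (Fin 3 → ℝ) →L[ℝ] E3) with hΦdef
  have hΦapp : ∀ (v : Fin 3 → ℝ) (i : Fin 3), Φ v i = v i := fun _ _ => rfl
  have hveq : vTheta = fun q => Φ (fun i => φ i q) := by
    funext q
    have hq0 : (0:ℝ) ≤ q 0 ^ 2 + q 2 ^ 2 := by positivity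
    refine PiLp.ext fun i => ?_
    rw [hΦapp, hφ]
    set w := Real.sqrt (q 0 ^ 2 + q 2 ^ 2) with hw
    have hq2 : q 0 ^ 2 + q 2 ^ 2 = w ^ 2 := (Real.sq_sqrt hq0).symm
    have htwo : (⟨2, by omega⟩ : Fin 3) = 2 := rfl
    fin_cases i <;>
      simp only [vTheta, vec3, WithLp.equiv_symm_apply, PiLp.toLp_apply, PiLp.smul_apply, smul_eq_mul,
        Fin.zero_eta, Fin.mk_one, htwo,
        Matrix.cons_val_zero, Matrix.cons_val_one, Matrix.head_cons, Matrix.cons_val_two,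
        Matrix.tail_cons, ← hw] <;>
      (try simp only [hq2]) <;> ring
  have hV : HasFDerivAt vTheta
      (Φ.comp (ContinuousLinearMap.pi fun i => fderiv ℝ (φ i) p)) p := by
    rw [hveq]; exact Φ.hasFDerivAt.comp p hVpi
  rw [div3, hV.fderiv]
  rw [LinearMap.trace_eq_matrix_trace ℝ (PiLp.basisFun 2 ℝ (Fin 3))]
  rw [Matrix.trace]
  simp only [Matrix.diag_apply, LinearMap.toMatrix_apply, PiLp.basisFun_repr,
    ContinuousLinearMap.coe_coe, ContinuousLinearMap.comp_apply,
    ContinuousLinearMap.pi_apply, PiLp.basisFun_apply, hΦapp]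
  rw [Fin.sum_univ_three]
  simp only [hφ0, hφ1, hφ2]
  rw [(show HasFDerivAt (fun q : E3 => -(q 0 * q 1) * (2 * (q 0 ^ 2 + q 2 ^ 2))⁻¹) _ p from h0).fderiv,
    (show HasFDerivAt (fun q : E3 =>
      (Real.sqrt (q 0 ^ 2 + q 2 ^ 2) - 2) * (2 * Real.sqrt (q 0 ^ 2 + q 2 ^ 2))⁻¹) _ p from h1).fderiv,
    (show HasFDerivAt (fun q : E3 => -(q 1 * q 2) * (2 * (q 0 ^ 2 + q 2 ^ 2))⁻¹) _ p from h2).fderiv]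
  simp only [ContinuousLinearMap.smul_apply, ContinuousLinearMap.sub_apply,
    ContinuousLinearMap.add_apply, ContinuousLinearMap.coe_smul', Pi.smul_apply,
    ContinuousLinearMap.neg_apply, PiLp.proj_apply, WithLp.equiv_symm_apply,
    smul_eq_mul, Pi.single_apply, PiLp.single_apply, Fin.reduceEq, reduceIte]
  norm_num
  field_simp
  ring
end
end

section
/- For all real R, r and every p = (x, y, z) with x² + z² ≠ 0, the curl of v_θ is orthogonal to the gradient of the torus level function: (curl v_θ)(p) · ∇T(p) = 0, where v_θ(x,y,z) = (1/(2s))·(−xy/s, s − 2, −yz/s) with s = √(x²+z²). In particular the surface curl Rot_S v_θ = (curl v_θ)·ν vanishes on every level surface of T with unit normal ν = ∇T/‖∇T‖. -/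
noncomputable section
open RealInnerProductSpace

namespace VAux

def g0 (x : E3) : ℝ := -(x 0 * x 1) * (2 * (x 0 ^ 2 + x 2 ^ 2))⁻¹
def g1 (x : E3) : ℝ := 1 / 2 - (Real.sqrt (x 0 ^ 2 + x 2 ^ 2))⁻¹
def g2 (x : E3) : ℝ := -(x 1 * x 2) * (2 * (x 0 ^ 2 + x 2 ^ 2))⁻¹

def P (i : Fin 3) : E3 →L[ℝ] ℝ := EuclideanSpace.proj i

variable {p : E3}

lemma hx' (i : Fin 3) : HasFDerivAt (fun x : E3 => x i) (P i) p := by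
  exact (EuclideanSpace.proj (𝕜 := ℝ) i).hasFDerivAt

lemma hsq (i : Fin 3) : HasFDerivAt (fun x : E3 => x i ^ 2) ((2 * p i) • P i) p := by
  have h := (hasDerivAt_pow 2 (p i)).comp_hasFDerivAt p (hx' (p := p) i)
  simpa [Function.comp_def] using h

lemma hQ : HasFDerivAt (fun x : E3 => x 0 ^ 2 + x 2 ^ 2)
    ((2 * p 0) • P 0 + (2 * p 2) • P 2) p :=
  (hsq 0).add (hsq 2)

lemma hg0 (hp : p 0 ^ 2 + p 2 ^ 2 ≠ 0) :
    HasFDerivAt g0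
      ((-(p 1) * ((p 0 ^ 2 + p 2 ^ 2) - 2 * p 0 ^ 2) / (2 * (p 0 ^ 2 + p 2 ^ 2) ^ 2)) • P 0 +
       (-(p 0) / (2 * (p 0 ^ 2 + p 2 ^ 2))) • P 1 +
       (p 0 * p 1 * p 2 / (p 0 ^ 2 + p 2 ^ 2) ^ 2) • P 2) p := by
  have h2q : (2 * (p 0 ^ 2 + p 2 ^ 2)) ≠ 0 := mul_ne_zero two_ne_zero hp
  have hinv := (hasDerivAt_inv h2q).comp_hasFDerivAt p (hQ.const_mul (2 : ℝ))
  have h := (((hx' 0).mul (hx' 1)).neg).mul hinv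
  refine h.congr_fderiv ?_
  ext v
  simp only [ContinuousLinearMap.add_apply, ContinuousLinearMap.smul_apply, smul_eq_mul,
    ContinuousLinearMap.coe_smul', Pi.smul_apply, ContinuousLinearMap.coe_add', Pi.add_apply,
    ContinuousLinearMap.neg_apply, Pi.mul_apply, Pi.neg_apply, Function.comp_apply]
  field_simp
  ring

lemma hg2 (hp : p 0 ^ 2 + p 2 ^ 2 ≠ 0) :
    HasFDerivAt g2
      ((p 0 * p 1 * p 2 / (p 0 ^ 2 + p 2 ^ 2) ^ 2) • P 0 +
       (-(p 2) / (2 * (p 0 ^ 2 + p 2 ^ 2))) • P 1 +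
       (-(p 1) * ((p 0 ^ 2 + p 2 ^ 2) - 2 * p 2 ^ 2) / (2 * (p 0 ^ 2 + p 2 ^ 2) ^ 2)) • P 2) p := by
  have h2q : (2 * (p 0 ^ 2 + p 2 ^ 2)) ≠ 0 := mul_ne_zero two_ne_zero hp
  have hinv := (hasDerivAt_inv h2q).comp_hasFDerivAt p (hQ.const_mul (2 : ℝ))
  have h := (((hx' 1).mul (hx' 2)).neg).mul hinv
  refine h.congr_fderiv ?_
  ext v
  simp only [ContinuousLinearMap.add_apply, ContinuousLinearMap.smul_apply, smul_eq_mul,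
    ContinuousLinearMap.coe_smul', Pi.smul_apply, ContinuousLinearMap.coe_add', Pi.add_apply,
    ContinuousLinearMap.neg_apply, Pi.mul_apply, Pi.neg_apply, Function.comp_apply]
  field_simp
  ring

lemma hg1 (hp : p 0 ^ 2 + p 2 ^ 2 ≠ 0) :
    HasFDerivAt g1
      ((p 0 / Real.sqrt (p 0 ^ 2 + p 2 ^ 2) ^ 3) • P 0 +
       (p 2 / Real.sqrt (p 0 ^ 2 + p 2 ^ 2) ^ 3) • P 2) p := by
  have hq0 : 0 < p 0 ^ 2 + p 2 ^ 2 := lt_of_le_of_ne (by positivity) (Ne.symm hp)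
  have hs : 0 < Real.sqrt (p 0 ^ 2 + p 2 ^ 2) := Real.sqrt_pos.mpr hq0
  have hS := hQ.sqrt hp
  have h := ((hasDerivAt_inv hs.ne').comp_hasFDerivAt p hS).const_sub (1 / 2 : ℝ)
  refine h.congr_fderiv ?_
  ext v
  simp only [ContinuousLinearMap.add_apply, ContinuousLinearMap.smul_apply, smul_eq_mul,
    ContinuousLinearMap.coe_smul', Pi.smul_apply, ContinuousLinearMap.coe_add', Pi.add_apply,
    ContinuousLinearMap.neg_apply, ContinuousLinearMap.coe_sub', Pi.sub_apply]
  field_simp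

lemma hT (R r : ℝ) :
    HasFDerivAt (torusT R r)
      (((4 * (p 0 ^ 2 + p 1 ^ 2 + p 2 ^ 2 + R ^ 2 - r ^ 2) - 8 * R ^ 2) * p 0) • P 0 +
       ((4 * (p 0 ^ 2 + p 1 ^ 2 + p 2 ^ 2 + R ^ 2 - r ^ 2)) * p 1) • P 1 +
       ((4 * (p 0 ^ 2 + p 1 ^ 2 + p 2 ^ 2 + R ^ 2 - r ^ 2) - 8 * R ^ 2) * p 2) • P 2) p := by
  have hA : HasFDerivAt (fun x : E3 => x 0 ^ 2 + x 1 ^ 2 + x 2 ^ 2 + R ^ 2 - r ^ 2)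
      ((2 * p 0) • P 0 + (2 * p 1) • P 1 + (2 * p 2) • P 2) p := by
    exact ((((hsq (p := p) 0).add (hsq 1)).add (hsq 2)).add_const (R ^ 2)).sub_const (r ^ 2)
  have hA2 := (hasDerivAt_pow 2 _).comp_hasFDerivAt p hA
  have h := hA2.sub (hQ.const_mul (4 * R ^ 2))
  refine h.congr_fderiv ?_
  ext v
  simp only [ContinuousLinearMap.add_apply, ContinuousLinearMap.smul_apply, smul_eq_mul,
    ContinuousLinearMap.coe_smul', Pi.smul_apply, ContinuousLinearMap.coe_add', Pi.add_apply,
    ContinuousLinearMap.coe_sub', Pi.sub_apply]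
  try ring

def G : E3 → E3 :=
  ⇑((EuclideanSpace.equiv (Fin 3) ℝ).symm.toContinuousLinearMap) ∘ (fun x i => ![g0, g1, g2] i x)

lemma vTheta_eq_G {x : E3} (hx : x 0 ^ 2 + x 2 ^ 2 ≠ 0) : vTheta x = G x := by
  have hq : 0 < x 0 ^ 2 + x 2 ^ 2 := lt_of_le_of_ne (by positivity) (Ne.symm hx)
  have hs : 0 < Real.sqrt (x 0 ^ 2 + x 2 ^ 2) := Real.sqrt_pos.mpr hq
  have hs2 : Real.sqrt (x 0 ^ 2 + x 2 ^ 2) ^ 2 = x 0 ^ 2 + x 2 ^ 2 := Real.sq_sqrt hq.le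
  ext i
  fin_cases i
  · simp [vTheta, G, vec3, g0, g1, g2, WithLp.equiv_symm_apply, PiLp.smul_apply, smul_eq_mul]
    field_simp
    rw [hs2]
  · simp [vTheta, G, vec3, g0, g1, g2, WithLp.equiv_symm_apply, PiLp.smul_apply, smul_eq_mul]
    field_simp
  · simp [vTheta, G, vec3, g0, g1, g2, WithLp.equiv_symm_apply, PiLp.smul_apply, smul_eq_mul]
    field_simp
    rw [hs2]

lemma eventually_eq (p : E3) (hp : p 0 ^ 2 + p 2 ^ 2 ≠ 0) : vTheta =ᶠ[nhds p] G := by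
  have hcont : Continuous fun x : E3 => x 0 ^ 2 + x 2 ^ 2 := by fun_prop
  have hopen : IsOpen {x : E3 | x 0 ^ 2 + x 2 ^ 2 ≠ 0} :=
    isOpen_compl_singleton.preimage hcont
  exact Filter.eventuallyEq_of_mem (hopen.mem_nhds hp) fun x hx => vTheta_eq_G hx


def Dvec (p : E3) : Fin 3 → (E3 →L[ℝ] ℝ) :=
  ![(-(p 1) * ((p 0 ^ 2 + p 2 ^ 2) - 2 * p 0 ^ 2) / (2 * (p 0 ^ 2 + p 2 ^ 2) ^ 2)) • P 0 +
      (-(p 0) / (2 * (p 0 ^ 2 + p 2 ^ 2))) • P 1 +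
      (p 0 * p 1 * p 2 / (p 0 ^ 2 + p 2 ^ 2) ^ 2) • P 2,
    (p 0 / Real.sqrt (p 0 ^ 2 + p 2 ^ 2) ^ 3) • P 0 +
      (p 2 / Real.sqrt (p 0 ^ 2 + p 2 ^ 2) ^ 3) • P 2,
    (p 0 * p 1 * p 2 / (p 0 ^ 2 + p 2 ^ 2) ^ 2) • P 0 +
      (-(p 2) / (2 * (p 0 ^ 2 + p 2 ^ 2))) • P 1 +
      (-(p 1) * ((p 0 ^ 2 + p 2 ^ 2) - 2 * p 2 ^ 2) / (2 * (p 0 ^ 2 + p 2 ^ 2) ^ 2)) • P 2]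

def sigma3 : (Fin 3 → ℝ) →L[ℝ] E3 :=
  ((EuclideanSpace.equiv (Fin 3) ℝ).symm : (Fin 3 → ℝ) ≃L[ℝ] E3).toContinuousLinearMap

lemma hG (hp : p 0 ^ 2 + p 2 ^ 2 ≠ 0) :
    HasFDerivAt G (sigma3.comp (ContinuousLinearMap.pi (Dvec p))) p := by
  refine sigma3.hasFDerivAt.comp p (hasFDerivAt_pi.mpr ?_)
  intro i
  fin_cases i
  · simpa [Dvec] using hg0 hp
  · simpa [Dvec] using hg1 hp
  · simpa [Dvec] using hg2 hp

lemma hfd (hp : p 0 ^ 2 + p 2 ^ 2 ≠ 0) :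
    fderiv ℝ vTheta p = sigma3.comp (ContinuousLinearMap.pi (Dvec p)) := by
  rw [(eventually_eq p hp).fderiv_eq]
  exact (hG hp).fderiv

lemma val (hp : p 0 ^ 2 + p 2 ^ 2 ≠ 0) (j i : Fin 3) :
    fderiv ℝ vTheta p (e3 j) i = (Dvec p i) (e3 j) := by
  rw [hfd hp]
  simp [sigma3, e3]

end VAux

/-- The curl of `v_θ` is orthogonal to the gradient of the torus level function
away from the y-axis; in particular the surface curl `Rot_S v_θ` vanishes on every
level surface of `T`. -/
theorem vTheta_curl_orthogonal_gradT (R r : ℝ) (p : E3)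
    (hp : p 0 ^ 2 + p 2 ^ 2 ≠ 0) :
    ⟪curl3 vTheta p, gradient (torusT R r) p⟫ = 0 := by
  classical
  have hq0 : 0 < p 0 ^ 2 + p 2 ^ 2 := lt_of_le_of_ne (by positivity) (Ne.symm hp)
  have hs : 0 < Real.sqrt (p 0 ^ 2 + p 2 ^ 2) := Real.sqrt_pos.mpr hq0
  have hcurl : curl3 vTheta p =
      vec3 (-(p 2) / (2 * (p 0 ^ 2 + p 2 ^ 2)) - p 2 / Real.sqrt (p 0 ^ 2 + p 2 ^ 2) ^ 3)
           0
           (p 0 / Real.sqrt (p 0 ^ 2 + p 2 ^ 2) ^ 3 + p 0 / (2 * (p 0 ^ 2 + p 2 ^ 2))) := by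
    unfold curl3
    rw [VAux.val hp 1 2, VAux.val hp 2 1, VAux.val hp 2 0, VAux.val hp 0 2,
      VAux.val hp 0 1, VAux.val hp 1 0]
    simp only [VAux.Dvec, VAux.P, Matrix.cons_val_zero, Matrix.cons_val_one, Matrix.head_cons,
      Matrix.cons_val_two, Matrix.tail_cons, ContinuousLinearMap.add_apply,
      ContinuousLinearMap.smul_apply, smul_eq_mul, PiLp.proj_apply, e3,
      EuclideanSpace.single_apply]
    unfold vec3
    congr 1
    funext i
    fin_cases i <;> simp [Fin.reduceEq] <;> ring
  rw [real_inner_comm]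
  have hgrad : ⟪gradient (torusT R r) p, curl3 vTheta p⟫ =
      fderiv ℝ (torusT R r) p (curl3 vTheta p) := by
    rw [gradient]
    exact InnerProductSpace.toDual_symm_apply
  rw [hgrad, (VAux.hT (p := p) R r).fderiv, hcurl]
  simp only [ContinuousLinearMap.add_apply, ContinuousLinearMap.smul_apply, smul_eq_mul,
    VAux.P, PiLp.proj_apply, vec3, WithLp.equiv_symm_apply, Matrix.cons_val_zero,
    Matrix.cons_val_one, Matrix.head_cons, Matrix.cons_val_two, Matrix.tail_cons]
  ring
end
end

section
/- Let R = 2 and r = 1/2, and let p = (x, y, z) satisfy T(p) = 0 (which forces x² + z² > 0). Then the normal–normal part of the Jacobian of v_θ vanishes in the direction of ∇T: ∇T(p) · ( Dv_θ(p) ∇T(p) ) = 0, where v_θ(x,y,z) = (1/(2s))·(−xy/s, s − 2, −yz/s) with s = √(x²+z²). Combined with div v_θ = 0, this shows that the surface divergence Div_S v_θ = div v_θ − ν·(Dv_θ ν) vanishes on the torus { T = 0 } with unit normal ν = ∇T/‖∇T‖, so v_θ is a harmonic (divergence- and curl-free) tangential field on the torus. -/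
noncomputable section
open RealInnerProductSpace

@[simp] lemma vec3_apply_zero (a b c : ℝ) : vec3 a b c 0 = a := rfl
@[simp] lemma vec3_apply_one (a b c : ℝ) : vec3 a b c 1 = b := rfl
@[simp] lemma vec3_apply_two (a b c : ℝ) : vec3 a b c 2 = c := rfl

set_option maxHeartbeats 2000000 in
/-- On the torus `{T = 0}` with `R = 2`, `r = 1/2`, the normal–normal part of the
Jacobian of `v_θ` vanishes in the direction of `∇T`:
`∇T(p) · (Dv_θ(p) ∇T(p)) = 0`. -/
theorem vTheta_normal_normal_jacobian_eq_zero (p : E3)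
    (hp : torusT 2 (1 / 2) p = 0) :
    ⟪gradient (torusT 2 (1 / 2)) p,
      fderiv ℝ vTheta p (gradient (torusT 2 (1 / 2)) p)⟫ = 0 := by
  have hx : HasFDerivAt (fun q : E3 => q 0) (EuclideanSpace.proj 0 : E3 →L[ℝ] ℝ) p := by
    have h := (EuclideanSpace.proj (𝕜 := ℝ) (0 : Fin 3)).hasFDerivAt (x := p)
    exact h.congr_of_eventuallyEq (Filter.Eventually.of_forall fun q => rfl)
  have hy : HasFDerivAt (fun q : E3 => q 1) (EuclideanSpace.proj 1 : E3 →L[ℝ] ℝ) p := by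
    have h := (EuclideanSpace.proj (𝕜 := ℝ) (1 : Fin 3)).hasFDerivAt (x := p)
    exact h.congr_of_eventuallyEq (Filter.Eventually.of_forall fun q => rfl)
  have hz : HasFDerivAt (fun q : E3 => q 2) (EuclideanSpace.proj 2 : E3 →L[ℝ] ℝ) p := by
    have h := (EuclideanSpace.proj (𝕜 := ℝ) (2 : Fin 3)).hasFDerivAt (x := p)
    exact h.congr_of_eventuallyEq (Filter.Eventually.of_forall fun q => rfl)
  unfold torusT at hp
  have hp' : (p 0^2 + p 1^2 + p 2^2 + 15/4)^2 = 16 * (p 0^2 + p 2^2) := by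
    linear_combination hp
  have hqpos : (0:ℝ) < p 0^2 + p 2^2 := by
    nlinarith [sq_nonneg (p 0), sq_nonneg (p 1), sq_nonneg (p 2), hp',
      sq_nonneg (p 0^2 + p 1^2 + p 2^2)]
  have hs2 : Real.sqrt (p 0^2 + p 2^2) ^ 2 = p 0^2 + p 2^2 := Real.sq_sqrt hqpos.le
  have hspos : 0 < Real.sqrt (p 0^2 + p 2^2) := Real.sqrt_pos.2 hqpos
  have hu : p 0^2 + p 1^2 + p 2^2 + 15/4 = 4 * Real.sqrt (p 0^2 + p 2^2) := by
    have h1 : (p 0^2 + p 1^2 + p 2^2 + 15/4 - 4 * Real.sqrt (p 0^2 + p 2^2)) *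
        (p 0^2 + p 1^2 + p 2^2 + 15/4 + 4 * Real.sqrt (p 0^2 + p 2^2)) = 0 := by
      linear_combination hp' - 16 * hs2
    rcases mul_eq_zero.1 h1 with h | h
    · linarith
    · nlinarith [sq_nonneg (p 0), sq_nonneg (p 1), sq_nonneg (p 2)]
  have hx2 := (hasDerivAt_pow 2 (p 0)).comp_hasFDerivAt p hx
  have hy2 := (hasDerivAt_pow 2 (p 1)).comp_hasFDerivAt p hy
  have hz2 := (hasDerivAt_pow 2 (p 2)).comp_hasFDerivAt p hz
  have hden := hx2.add hz2
  have hTa := (((hx2.add hy2).add hz2).add_const ((2:ℝ)^2)).sub_const ((1/2:ℝ)^2)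
  have hTb := ((hasDerivAt_pow 2 (p 0^2 + p 1^2 + p 2^2 + (2:ℝ)^2 - (1/2:ℝ)^2)).comp_hasFDerivAt
    p hTa).sub (hden.const_mul (4 * (2:ℝ)^2))
  have hGrad : HasGradientAt (torusT 2 (1/2))
      (vec3 (4*(p 0^2+p 1^2+p 2^2+15/4)*p 0 - 32*p 0)
            (4*(p 0^2+p 1^2+p 2^2+15/4)*p 1)
            (4*(p 0^2+p 1^2+p 2^2+15/4)*p 2 - 32*p 2)) p := by
    rw [hasGradientAt_iff_hasFDerivAt]
    convert hTb using 1
    · rfl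
    · rfl
    · rfl
    refine ContinuousLinearMap.ext fun v => ?_
    simp [InnerProductSpace.toDual_apply_apply, PiLp.inner_apply, RCLike.inner_apply,
      Fin.sum_univ_three, ContinuousLinearMap.add_apply, ContinuousLinearMap.smul_apply,
      ContinuousLinearMap.sub_apply, ContinuousLinearMap.comp_apply, smul_eq_mul]
    ring
  have hqne : (2:ℝ) * (p 0^2 + p 2^2) ≠ 0 := mul_ne_zero two_ne_zero hqpos.ne'
  have hsne : (2:ℝ) * Real.sqrt (p 0^2 + p 2^2) ≠ 0 := mul_ne_zero two_ne_zero hspos.ne'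
  have hinvden := (hasDerivAt_inv hqne).comp_hasFDerivAt p (hden.const_mul 2)
  have hD1 := ((hx.mul hy).neg).mul hinvden
  have hsq := hden.sqrt hqpos.ne'
  have hinvs := (hasDerivAt_inv hsne).comp_hasFDerivAt p (hsq.const_mul 2)
  have hD2 := (hsq.sub_const 2).mul hinvs
  have hD3 := ((hy.mul hz).neg).mul hinvden
  have hV := (hD1.smul_const (e3 0)).add ((hD2.smul_const (e3 1)).add (hD3.smul_const (e3 2)))
  have hEv : vTheta =ᶠ[nhds p] (fun q : E3 =>
      (-(q 0 * q 1) * (2 * (q 0 ^ 2 + q 2 ^ 2))⁻¹) • e3 0 +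
      (((Real.sqrt (q 0 ^ 2 + q 2 ^ 2) - 2) * (2 * Real.sqrt (q 0 ^ 2 + q 2 ^ 2))⁻¹) • e3 1 +
       (-(q 1 * q 2) * (2 * (q 0 ^ 2 + q 2 ^ 2))⁻¹) • e3 2)) := by
    refine Filter.Eventually.of_forall fun q => ?_
    have hss : Real.sqrt (q 0^2 + q 2^2) * Real.sqrt (q 0^2 + q 2^2) = q 0^2 + q 2^2 :=
      Real.mul_self_sqrt (by positivity)
    ext i
    fin_cases i <;>
      simp [vTheta, e3, EuclideanSpace.single_apply, PiLp.add_apply, PiLp.smul_apply,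
        smul_eq_mul]
    · conv_rhs => rw [← hss]
      ring
    · ring
    · conv_rhs => rw [← hss]
      ring
  have hVT := hV.congr_of_eventuallyEq hEv
  rw [hGrad.gradient, hVT.fderiv]
  simp only [ContinuousLinearMap.add_apply, ContinuousLinearMap.smulRight_apply,
    ContinuousLinearMap.smul_apply, ContinuousLinearMap.sub_apply, ContinuousLinearMap.neg_apply,
    PiLp.inner_apply, RCLike.inner_apply, conj_trivial, Fin.sum_univ_three, PiLp.add_apply,
    PiLp.smul_apply, smul_eq_mul, e3, EuclideanSpace.single_apply, PiLp.proj_apply,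
    vec3_apply_zero, vec3_apply_one, vec3_apply_two]
  norm_num [Function.comp]
  simp only [Fin.reduceEq, reduceIte]
  generalize hsg : Real.sqrt (p 0 ^ 2 + p 2 ^ 2) = s at hs2 hspos hu ⊢
  rw [← hs2]
  field_simp [hspos.ne']
  linear_combination (-2 * p 1 * (p 0^2 + p 2^2) * (4*(p 0^2+p 1^2+p 2^2)+15-32)^2) * hs2 +
    (8 * s * p 1 * (p 0^2 + p 2^2) * (4*(p 0^2+p 1^2+p 2^2)+15-32)) * hu
end
end
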